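/- Fix an integer n > 1. The optimal value of Problem (Q) equals 2·(n−1), and it is attained at the feasible point a1 = 1, a2 = −1/n, b1 = −1/(n−1), b2 = 1/(n·(n−1)), α = 0. -/

import Mathlib

/-- Objective of Problem (Q). -/
noncomputable def FQ (n : ℕ) (a1 a2 b1 b2 α : ℝ) : ℝ :=
  ((n : ℝ) - 1) * Real.sqrt (2 * (a1 ^ 2 + b1 ^ 2) + 2 * |a1 ^ 2 - b1 ^ 2|) +
    2 * Real.sqrt ((a1 + n * a2) ^ 2 + n * α ^ 2)

/-- Feasible set of Problem (Q). -/
def FeasQ (n : ℕ) (a1 a2 b1 b2 α : ℝ) : Prop :=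
  1 ≤ a1 ∧ b1 + b2 - α + 1 ≤ a1 + a2 + α ∧ a1 + b1 + n * (a2 + b2) = 0

/-- The optimal value of Problem (Q) is `2·(n−1)`, attained at the feasible point
`a1 = 1`, `a2 = −1/n`, `b1 = −1/(n−1)`, `b2 = 1/(n·(n−1))`, `α = 0`. -/
theorem Q_optimal_value (n : ℕ) (hn : 1 < n) :
    FeasQ n 1 (-(1 / (n : ℝ))) (-(1 / ((n : ℝ) - 1))) (1 / ((n : ℝ) * ((n : ℝ) - 1))) 0 ∧
    FQ n 1 (-(1 / (n : ℝ))) (-(1 / ((n : ℝ) - 1))) (1 / ((n : ℝ) * ((n : ℝ) - 1))) 0 =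
      2 * ((n : ℝ) - 1) ∧
    ∀ a1 a2 b1 b2 α : ℝ, FeasQ n a1 a2 b1 b2 α →
      2 * ((n : ℝ) - 1) ≤ FQ n a1 a2 b1 b2 α := by
  have hn2 : (2 : ℝ) ≤ (n : ℝ) := by exact_mod_cast hn
  have hn0 : (n : ℝ) ≠ 0 := by positivity
  have hn1 : (n : ℝ) - 1 ≠ 0 := by linarith
  have hn1pos : (0 : ℝ) < (n : ℝ) - 1 := by linarith
  refine ⟨⟨le_refl 1, ?_, ?_⟩, ?_, ?_⟩
  · have key : -(1/((n:ℝ)-1)) + 1/((n:ℝ)*((n:ℝ)-1)) = -(1/(n:ℝ)) := by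
      field_simp
      ring
    linarith
  · field_simp
    ring
  · -- value at the point
    have hb : (-(1 / ((n : ℝ) - 1))) ^ 2 ≤ 1 := by
      rw [neg_sq, div_pow, one_pow, div_le_one (by positivity)]
      nlinarith
    have habs : |(1 : ℝ) ^ 2 - (-(1 / ((n : ℝ) - 1))) ^ 2| = 1 - (-(1 / ((n : ℝ) - 1))) ^ 2 := by
      rw [abs_of_nonneg]; · ring_nf
      nlinarith
    unfold FQ
    rw [habs]
    have h4 : 2 * ((1:ℝ) ^ 2 + (-(1 / ((n : ℝ) - 1))) ^ 2) + 2 * (1 - (-(1 / ((n : ℝ) - 1))) ^ 2) = 4 := by ring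
    rw [h4]
    have hz : ((1 : ℝ) + (n : ℝ) * (-(1 / (n : ℝ)))) ^ 2 + (n : ℝ) * 0 ^ 2 = 0 := by
      field_simp
      norm_num
    rw [hz, Real.sqrt_zero]
    have : Real.sqrt 4 = 2 := by
      rw [show (4:ℝ) = 2^2 by norm_num, Real.sqrt_sq (by norm_num : (0:ℝ) ≤ 2)]
    rw [this]; ring
  · rintro a1 a2 b1 b2 α ⟨ha1, hineq, heq⟩
    unfold FQ
    have h1 : 2 * a1 ≤ Real.sqrt (2 * (a1 ^ 2 + b1 ^ 2) + 2 * |a1 ^ 2 - b1 ^ 2|) := by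
      have h4 : 4 * a1 ^ 2 ≤ 2 * (a1 ^ 2 + b1 ^ 2) + 2 * |a1 ^ 2 - b1 ^ 2| := by
        have := abs_nonneg (a1 ^ 2 - b1 ^ 2)
        have := le_abs_self (a1 ^ 2 - b1 ^ 2)
        nlinarith
      calc 2 * a1 = Real.sqrt ((2 * a1) ^ 2) := by
            rw [Real.sqrt_sq (by linarith)]
        _ ≤ _ := by
            apply Real.sqrt_le_sqrt; nlinarith
    have h2 : (0 : ℝ) ≤ Real.sqrt ((a1 + n * a2) ^ 2 + n * α ^ 2) := Real.sqrt_nonneg _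
    nlinarith [mul_le_mul_of_nonneg_left h1 (le_of_lt hn1pos)]
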